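/- Let a : Fin (n+1) → ℕ be strictly increasing, N ≥ 1, and suppose the range of a is a Sidon set modulo N. Then the group of edge-label-preserving automorphisms of S_N(a) acts transitively on the vertex set: for all x, y ∈ ZMod (2N) there exists a graph automorphism φ of S_N(a) with φ x = y such that, for every q : Fin (n+1), φ maps every edge with label a q to an edge with label a q. -/

import Mathlib

/-- A set `A ⊆ ℕ` is a Sidon set modulo `N` if the sums of pairs of its
elements are pairwise distinct modulo `N`. -/
def IsSidonModSet (N : ℕ) (A : Set ℕ) : Prop :=
  ∀ a ∈ A, ∀ b ∈ A, ∀ c ∈ A, ∀ d ∈ A,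
    a + b ≡ c + d [MOD N] → (a = c ∧ b = d) ∨ (a = d ∧ b = c)

/-- The graph `S_N(a)` on `ZMod (2N)`: distinct `x, y` are adjacent iff there are
`r : Fin (n+1)` and `v : ZMod (2N)` with `v.val` even such that
`{x, y} = {v, v + (2 (a r) - 1)}`. -/
def SGraph (n N : ℕ) (a : Fin (n + 1) → ℕ) : SimpleGraph (ZMod (2 * N)) where
  Adj x y := x ≠ y ∧ ∃ r : Fin (n + 1), ∃ v : ZMod (2 * N), Even v.val ∧
    s(x, y) = s(v, v + (2 * (a r : ZMod (2 * N)) - 1))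
  symm := by
    constructor
    rintro x y ⟨hxy, r, v, hv, h⟩
    exact ⟨hxy.symm, r, v, hv, Sym2.eq_swap.trans h⟩
  loopless := by
    constructor
    rintro x ⟨hxx, -⟩
    exact hxx rfl


/-- The group of edge-label-preserving automorphisms of `S_N(a)` acts
transitively on the vertex set. -/
theorem stmt_8 (n N : ℕ) (hN : 1 ≤ N) (a : Fin (n + 1) → ℕ)
    (ha : StrictMono a) (hS : IsSidonModSet N (Set.range a)) :
    ∀ x y : ZMod (2 * N),
      ∃ φ : SGraph n N a ≃g SGraph n N a,
        φ x = y ∧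
        (∀ q : Fin (n + 1), ∀ w : ZMod (2 * N), Even w.val →
          ∃ w' : ZMod (2 * N), Even w'.val ∧
            s(φ w, φ (w + (2 * (a q : ZMod (2 * N)) - 1)))
              = s(w', w' + (2 * (a q : ZMod (2 * N)) - 1))) := by
  haveI : NeZero (2 * N) := ⟨by omega⟩
  set p : ZMod (2 * N) →+* ZMod 2 := ZMod.castHom ⟨N, rfl⟩ (ZMod 2) with hp
  have heven : ∀ v : ZMod (2 * N), Even v.val ↔ p v = 0 := by
    intro v
    rw [even_iff_two_dvd, ← ZMod.natCast_eq_zero_iff]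
    rw [hp, ZMod.castHom_apply, ZMod.natCast_val]
  have h2 : p 2 = 0 := by
    have h' : (2 : ZMod (2*N)) = ((2:ℕ) : ZMod (2*N)) := by push_cast; ring
    rw [h', map_natCast]; decide
  have hpd : ∀ q : Fin (n + 1), p (2 * (a q : ZMod (2 * N)) - 1) = 1 := by
    intro q
    rw [map_sub, map_mul, h2, map_one, zero_mul, zero_sub]
    decide
  have hzm2 : ∀ z : ZMod 2, z = 0 ∨ z = 1 := by decide
  intro x y
  -- translation helper
  have hadd : ∀ t : ZMod (2 * N), p t = 0 → ∀ u w : ZMod (2 * N),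
      (SGraph n N a).Adj u w → (SGraph n N a).Adj (u + t) (w + t) := by
    rintro t ht u w ⟨hne, r, v, hv, h⟩
    refine ⟨fun h' => hne (add_right_cancel h'), r, v + t, ?_, ?_⟩
    · rw [heven] at hv ⊢
      rw [map_add, hv, ht, add_zero]
    · rcases Sym2.eq_iff.mp h with ⟨rfl, rfl⟩ | ⟨rfl, rfl⟩
      · rw [Sym2.eq_iff]; left; constructor <;> ring
      · rw [Sym2.eq_iff]; right; constructor <;> ring
  -- reflection helper
  have hrefl : ∀ c : ZMod (2 * N), p c = 1 → ∀ u w : ZMod (2 * N),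
      (SGraph n N a).Adj u w → (SGraph n N a).Adj (c - u) (c - w) := by
    rintro c hc u w ⟨hne, r, v, hv, h⟩
    refine ⟨fun h' => hne (sub_right_injective h'), r,
      c - v - (2 * (a r : ZMod (2 * N)) - 1), ?_, ?_⟩
    · rw [heven] at hv ⊢
      rw [map_sub, map_sub, hv, hc, hpd r]
      decide
    · rcases Sym2.eq_iff.mp h with ⟨rfl, rfl⟩ | ⟨rfl, rfl⟩
      · rw [Sym2.eq_iff]; right; constructor <;> ring
      · rw [Sym2.eq_iff]; left; constructor <;> ring
  by_cases hpar : p (y - x) = 0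
  · -- translation by t = y - x
    refine ⟨⟨Equiv.addRight (y - x), ?_⟩, ?_, ?_⟩
    · intro u w
      constructor
      · intro h
        have := hadd (-(y - x)) (by rw [map_neg, hpar, neg_zero]) _ _ h
        simp only [Equiv.coe_addRight] at this
        rwa [show u + (y - x) + -(y - x) = u from by ring,
          show w + (y - x) + -(y - x) = w from by ring] at this
      · exact fun h => hadd (y - x) hpar u w h
    · simp
    · intro q w hw
      refine ⟨w + (y - x), ?_, ?_⟩
      · rw [heven] at hw ⊢; rw [map_add, hw, hpar, add_zero]
      · simp only [RelIso.coe_fn_mk, Equiv.coe_addRight]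
        rw [Sym2.eq_iff]; left; constructor <;> ring
  · -- reflection around c = x + y
    have hc : p (x + y) = 1 := by
      have hxy : p (x + y) = p (y - x) := by
        have : x + y = (y - x) + 2 * x := by ring
        rw [this, map_add, map_mul, h2, zero_mul, add_zero]
      rcases hzm2 (p (y - x)) with h | h
      · exact absurd h hpar
      · rw [hxy, h]
    have hinv : Function.Involutive (fun v : ZMod (2 * N) => (x + y) - v) := by
      intro v; simp
    refine ⟨⟨hinv.toPerm, ?_⟩, ?_, ?_⟩
    · intro u w
      constructor
      · intro h
        have := hrefl (x + y) hc _ _ h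
        simpa [Function.Involutive.coe_toPerm, hinv u, hinv w] using this
      · exact fun h => hrefl (x + y) hc u w h
    · simp [Function.Involutive.coe_toPerm]
    · intro q w hw
      refine ⟨(x + y) - w - (2 * (a q : ZMod (2 * N)) - 1), ?_, ?_⟩
      · rw [heven] at hw ⊢
        rw [map_sub, map_sub, hw, hc, hpd q]
        decide
      · simp only [RelIso.coe_fn_mk, Function.Involutive.coe_toPerm]
        rw [Sym2.eq_iff]; right; constructor <;> ring
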